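/- Let n ≥ 2, k ∈ {1,…,n−1}, R > 0, h ≥ 0 with hR < k, and h* ≥ max{h, h/(k−hR)}. Let ξ : (0,∞) → [0,∞) be continuous, non-increasing, with ∫₀^ε t^{k-1}ξ(t)dt < ∞, and let ψ solve (t^{k-1}e^{-h*t}ψ')' = e^{-h*t}t^{k-1}ξ on (0,R) with lim_{t→0} t^{k-1}ψ'(t) = 0. Then w(x) = ψ(|x−x₀|) satisfies P_k^-(∇²w) − h|∇w| ≥ ξ(r)/(1 + h*R) pointwise on B_R(x₀)∖{x₀}. -/

import Mathlib

open MeasureTheory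

/-- P_k^-(∇²w)(x): the sum of the k smallest eigenvalues of the Hessian of w at x,
via its min-max characterization as the infimum of the trace of the Hessian over
k-dimensional subspaces (orthonormal k-tuples). -/
noncomputable def PkHess (n k : ℕ) (w : EuclideanSpace ℝ (Fin n) → ℝ)
    (x : EuclideanSpace ℝ (Fin n)) : ℝ :=
  sInf {t : ℝ | ∃ e : Fin k → EuclideanSpace ℝ (Fin n), Orthonormal ℝ e ∧
    t = ∑ i, iteratedFDeriv ℝ 2 w x ![e i, e i]}

section Aux


noncomputable def innR (E : Type*) [NormedAddCommGroup E] [InnerProductSpace ℝ E] :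
    E →L[ℝ] E →L[ℝ] ℝ :=
  (isBoundedBilinearMap_inner (𝕜 := ℝ)).toContinuousLinearMap

@[simp] lemma innR_apply {E : Type*} [NormedAddCommGroup E] [InnerProductSpace ℝ E] (a b : E) :
    innR E a b = inner ℝ a b := rfl

section Norm
variable {E : Type*} [NormedAddCommGroup E] [InnerProductSpace ℝ E]

lemma hasFDerivAt_norm' {z : E} (hz : z ≠ 0) :
    HasFDerivAt (fun y : E => ‖y‖) (innR E (‖z‖⁻¹ • z)) z := by
  have h1 : HasFDerivAt (fun y : E => ‖y‖ ^ 2) (2 • (innerSL ℝ z)) z :=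
    (hasStrictFDerivAt_norm_sq z).hasFDerivAt
  have hz' : ‖z‖ ≠ 0 := norm_ne_zero_iff.2 hz
  have h2 : HasDerivAt Real.sqrt (1 / (2 * ‖z‖)) (‖z‖ ^ 2) := by
    have := Real.hasDerivAt_sqrt (x := ‖z‖ ^ 2) (pow_ne_zero 2 hz')
    rwa [Real.sqrt_sq (norm_nonneg z)] at this
  have h3 := h2.comp_hasFDerivAt z h1
  have heq : (fun y : E => Real.sqrt (‖y‖ ^ 2)) = fun y : E => ‖y‖ := by
    funext y; rw [Real.sqrt_sq (norm_nonneg y)]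
  rw [Function.comp_def, heq] at h3
  refine h3.congr_fderiv ?_
  symm
  ext v
  simp [inner_smul_left, real_inner_comm]
  field_simp

end Norm

section Radial
variable {E : Type*} [NormedAddCommGroup E] [InnerProductSpace ℝ E]
variable {ψ : ℝ → ℝ} {x₀ : E}

lemma radial_hasFDerivAt {y : E} (hy : y ≠ x₀)
    (hψ1 : HasDerivAt ψ (deriv ψ ‖y - x₀‖) ‖y - x₀‖) :
    HasFDerivAt (fun y : E => ψ ‖y - x₀‖)
      (innR E ((deriv ψ ‖y - x₀‖ / ‖y - x₀‖) • (y - x₀))) y := by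
  have hz : y - x₀ ≠ 0 := sub_ne_zero.2 hy
  have hN : HasFDerivAt (fun y : E => ‖y - x₀‖)
      ((innR E (‖y - x₀‖⁻¹ • (y - x₀)))) y := by
    have := (hasFDerivAt_norm' hz).comp y ((hasFDerivAt_id y).sub_const x₀)
    simpa [Function.comp_def] using this
  have h := hψ1.comp_hasFDerivAt y hN
  rw [Function.comp_def] at h
  refine h.congr_fderiv ?_
  symm
  rw [← _root_.map_smul]
  congr 1
  rw [smul_smul, div_eq_mul_inv]

end Radial

section Radial2
variable {E : Type*} [NormedAddCommGroup E] [InnerProductSpace ℝ E] [CompleteSpace E]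
variable {ψ : ℝ → ℝ} {s : Set ℝ} {x₀ x : E}

lemma radial_gradient (hx : x ≠ x₀) (hψ1 : HasDerivAt ψ (deriv ψ ‖x - x₀‖) ‖x - x₀‖) :
    gradient (fun y : E => ψ ‖y - x₀‖) x = (deriv ψ ‖x - x₀‖ / ‖x - x₀‖) • (x - x₀) := by
  have h := radial_hasFDerivAt hx hψ1
  have h2 : HasGradientAt (fun y : E => ψ ‖y - x₀‖)
      ((deriv ψ ‖x - x₀‖ / ‖x - x₀‖) • (x - x₀)) x := by
    apply hasGradientAt_iff_hasFDerivAt.2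
    refine h.congr_fderiv ?_
    rfl
  exact h2.gradient

omit [CompleteSpace E] in
lemma radial_hessian (hs : IsOpen s)
    (hψ : ContDiffOn ℝ 2 ψ s) (hx : x ≠ x₀) (hd : ‖x - x₀‖ ∈ s) (v : E) :
    iteratedFDeriv ℝ 2 (fun y : E => ψ ‖y - x₀‖) x ![v, v] =
      (deriv ψ ‖x - x₀‖ / ‖x - x₀‖) * ‖v‖ ^ 2 +
      (deriv (deriv ψ) ‖x - x₀‖ - deriv ψ ‖x - x₀‖ / ‖x - x₀‖) *
        (inner ℝ (‖x - x₀‖⁻¹ • (x - x₀)) v : ℝ) ^ 2 := by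
  set d : ℝ := ‖x - x₀‖ with hdd
  have hz : x - x₀ ≠ 0 := sub_ne_zero.2 hx
  have hd0 : (0:ℝ) < d := norm_pos_iff.2 hz
  set c : E → ℝ := fun y => deriv ψ ‖y - x₀‖ / ‖y - x₀‖ with hc
  set G : E → E →L[ℝ] ℝ := fun y => innR E (c y • (y - x₀)) with hG
  -- differentiability of ψ and deriv ψ on s
  have hdiff : ∀ t ∈ s, HasDerivAt ψ (deriv ψ t) t := fun t ht =>
    (((hψ.differentiableOn two_ne_zero) t ht).differentiableAt
      (hs.mem_nhds ht)).hasDerivAt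
  have hψ' : ContDiffOn ℝ 1 (deriv ψ) s := hψ.deriv_of_isOpen hs (by norm_num)
  have hdiff' : HasDerivAt (deriv ψ) (deriv (deriv ψ) d) d :=
    (((hψ'.differentiableOn one_ne_zero) d hd).differentiableAt (hs.mem_nhds hd)).hasDerivAt
  -- the eventual equality of fderiv w with G
  have hU : ∀ᶠ y in nhds x, fderiv ℝ (fun y : E => ψ ‖y - x₀‖) y = G y := by
    have hUopen : IsOpen {y : E | y ≠ x₀ ∧ ‖y - x₀‖ ∈ s} := by
      apply IsOpen.inter (isOpen_ne)
      exact (continuous_norm.comp (continuous_id.sub continuous_const)).isOpen_preimage s hs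
    have hUmem : x ∈ {y : E | y ≠ x₀ ∧ ‖y - x₀‖ ∈ s} := ⟨hx, hd⟩
    filter_upwards [hUopen.mem_nhds hUmem] with y hy
    exact (radial_hasFDerivAt hy.1 (hdiff _ hy.2)).fderiv
  -- derivative of c at x
  have hN : HasFDerivAt (fun y : E => ‖y - x₀‖) ((innR E (d⁻¹ • (x - x₀)))) x := by
    have := (hasFDerivAt_norm' hz).comp x ((hasFDerivAt_id x).sub_const x₀)
    simpa [Function.comp_def] using this
  set q : ℝ := (deriv (deriv ψ) d * d - deriv ψ d * 1) / d ^ 2 with hq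
  have hcd : HasDerivAt (fun t => deriv ψ t / t) q d :=
    hdiff'.div (hasDerivAt_id d) hd0.ne'
  have hcx : HasFDerivAt c (q • innR E (d⁻¹ • (x - x₀))) x := by
    have := hcd.comp_hasFDerivAt x hN
    simpa [hc, Function.comp_def] using this
  have hm : HasFDerivAt (fun y : E => c y • (y - x₀))
      (c x • (ContinuousLinearMap.id ℝ E) +
        (q • innR E (d⁻¹ • (x - x₀))).smulRight (x - x₀)) x := by
    have := hcx.smul ((hasFDerivAt_id x).sub_const x₀)
    simpa [Pi.smul_def'] using this
  have hGx : HasFDerivAt G ((innR E).comp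
      (c x • (ContinuousLinearMap.id ℝ E) +
        (q • innR E (d⁻¹ • (x - x₀))).smulRight (x - x₀))) x :=
    ((innR E).hasFDerivAt).comp x hm
  have hUq : (fun y => fderiv ℝ (fun y : E => ψ ‖y - x₀‖) y) =ᶠ[nhds x] G := hU
  have key : fderiv ℝ (fderiv ℝ (fun y : E => ψ ‖y - x₀‖)) x = (innR E).comp
      (c x • (ContinuousLinearMap.id ℝ E) +
        (q • innR E (d⁻¹ • (x - x₀))).smulRight (x - x₀)) := by
    rw [hUq.fderiv_eq]
    exact hGx.fderiv
  rw [iteratedFDeriv_two_apply, key]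
  have hv0 : (![v, v] : Fin 2 → E) 0 = v := rfl
  have hv1 : (![v, v] : Fin 2 → E) 1 = v := rfl
  rw [hv0, hv1]
  have hdne : d ≠ 0 := hd0.ne'
  simp only [ContinuousLinearMap.comp_apply, ContinuousLinearMap.add_apply,
    ContinuousLinearMap.smul_apply, ContinuousLinearMap.id_apply,
    ContinuousLinearMap.smulRight_apply, innR_apply, inner_add_left,
    real_inner_smul_left, smul_eq_mul, real_inner_self_eq_norm_sq]
  rw [hq, hc]
  field_simp
  ring
end Radial2

section RealSide
variable {ψ ξ : ℝ → ℝ} {R hstar : ℝ} {k : ℕ}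

lemma g_hasDerivAt (hψ : ContDiffOn ℝ 2 ψ (Set.Ioo 0 R)) {t : ℝ} (ht : t ∈ Set.Ioo 0 R) :
    HasDerivAt (fun s => s ^ (k-1) * Real.exp (-hstar * s) * deriv ψ s)
      (((k-1 : ℕ) * t ^ (k-1-1) * Real.exp (-hstar * t) +
        t ^ (k-1) * (Real.exp (-hstar * t) * (-hstar))) * deriv ψ t +
        t ^ (k-1) * Real.exp (-hstar * t) * deriv (deriv ψ) t) t := by
  have hψ' : ContDiffOn ℝ 1 (deriv ψ) (Set.Ioo 0 R) :=
    hψ.deriv_of_isOpen isOpen_Ioo (by norm_num)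
  have hdiff' : HasDerivAt (deriv ψ) (deriv (deriv ψ) t) t :=
    (((hψ'.differentiableOn one_ne_zero) t ht).differentiableAt
      (isOpen_Ioo.mem_nhds ht)).hasDerivAt
  have h1 : HasDerivAt (fun s : ℝ => s ^ (k-1)) ((k-1 : ℕ) * t ^ (k-1-1)) t :=
    hasDerivAt_pow (k-1) t
  have h2 : HasDerivAt (fun s : ℝ => Real.exp (-hstar * s))
      (Real.exp (-hstar * t) * (-hstar)) t := by
    have := ((hasDerivAt_id t).const_mul (-hstar)).exp
    simpa using this
  exact (h1.mul h2).mul hdiff'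

lemma psi_second (hψ : ContDiffOn ℝ 2 ψ (Set.Ioo 0 R))
    (hode : ∀ t ∈ Set.Ioo (0 : ℝ) R,
      deriv (fun s => s ^ (k - 1) * Real.exp (-hstar * s) * deriv ψ s) t =
        Real.exp (-hstar * t) * t ^ (k - 1) * ξ t)
    (hk1 : 1 ≤ k) {d : ℝ} (hd : d ∈ Set.Ioo 0 R) :
    d * deriv (deriv ψ) d =
      d * ξ d + hstar * d * deriv ψ d - ((k - 1 : ℕ) : ℝ) * deriv ψ d := by
  have hd0 : 0 < d := hd.1
  have hE := (g_hasDerivAt (hstar := hstar) (k := k) hψ hd).deriv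
  rw [hode d hd] at hE
  have hA : Real.exp (-hstar * d) ≠ 0 := (Real.exp_pos _).ne'
  have hmd : ((k-1 : ℕ) : ℝ) * d ^ (k-1-1) * d = ((k-1 : ℕ) : ℝ) * d ^ (k-1) := by
    rcases eq_or_lt_of_le hk1 with h | h
    · simp [← h]
    · obtain ⟨j, hj⟩ : ∃ j, k - 1 = j + 1 := ⟨k - 2, by omega⟩
      rw [hj]
      simp [pow_succ]
      ring
  have hne : d ^ (k-1) * Real.exp (-hstar * d) ≠ 0 := by positivity
  apply mul_left_cancel₀ hne
  linear_combination (-d) * hE - (Real.exp (-hstar * d) * deriv ψ d) * hmd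
end RealSide

section RealSide2
variable {ψ ξ : ℝ → ℝ} {R hstar : ℝ} {k : ℕ}

lemma psi_first (hψ : ContDiffOn ℝ 2 ψ (Set.Ioo 0 R))
    (hode : ∀ t ∈ Set.Ioo (0 : ℝ) R,
      deriv (fun s => s ^ (k - 1) * Real.exp (-hstar * s) * deriv ψ s) t =
        Real.exp (-hstar * t) * t ^ (k - 1) * ξ t)
    (hanti : AntitoneOn ξ (Set.Ioi 0)) (hnn : ∀ t ∈ Set.Ioi (0 : ℝ), 0 ≤ ξ t)
    (hlim : Filter.Tendsto (fun t => t ^ (k - 1) * deriv ψ t)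
      (nhdsWithin 0 (Set.Ioi 0)) (nhds 0))
    (hk1 : 1 ≤ k) (hs0 : 0 ≤ hstar) {d : ℝ} (hd : d ∈ Set.Ioo 0 R) :
    d * ξ d / k ≤ deriv ψ d := by
  have hd0 : 0 < d := hd.1
  have hk0 : ((k : ℕ) : ℝ) ≠ 0 := Nat.cast_ne_zero.2 (by omega)
  set C : ℝ := Real.exp (-hstar * d) * ξ d with hC
  set φ : ℝ → ℝ := fun s => s ^ (k-1) * Real.exp (-hstar * s) * deriv ψ s - C / k * s ^ k
    with hφ
  have hξd : 0 ≤ ξ d := hnn d hd.1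
  have hψ' : ContDiffOn ℝ 1 (deriv ψ) (Set.Ioo 0 R) :=
    hψ.deriv_of_isOpen isOpen_Ioo (by norm_num)
  -- derivative of φ on Ioo 0 d
  have hφdiff : ∀ t ∈ Set.Ioo (0:ℝ) d, HasDerivAt φ
      (t ^ (k-1) * (Real.exp (-hstar * t) * ξ t - C)) t := by
    intro t ht
    have ht' : t ∈ Set.Ioo (0:ℝ) R := ⟨ht.1, ht.2.trans hd.2⟩
    have h3 := g_hasDerivAt (hstar := hstar) (k := k) hψ ht'
    have hPV := (h3.deriv).symm.trans (hode t ht')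
    rw [hPV] at h3
    have h4 : HasDerivAt (fun s : ℝ => C / k * s ^ k) (C / k * ((k:ℝ) * t ^ (k-1))) t :=
      (hasDerivAt_pow k t).const_mul (C / k)
    have h5 := h3.sub h4
    refine h5.congr_deriv ?_
    symm
    field_simp
  -- monotone on Ioc 0 d
  have hmono : MonotoneOn φ (Set.Ioc 0 d) := by
    apply monotoneOn_of_deriv_nonneg (convex_Ioc 0 d)
    · apply ContinuousOn.sub
      · apply ContinuousOn.mul
        · exact ((continuous_pow (k-1)).mul
            (Real.continuous_exp.comp (continuous_const.mul continuous_id))).continuousOn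
        · exact hψ'.continuousOn.mono
            (fun t ht => ⟨ht.1, lt_of_le_of_lt ht.2 hd.2⟩)
      · exact (continuous_const.mul (continuous_pow k)).continuousOn
    · intro t ht
      rw [interior_Ioc] at ht
      exact (hφdiff t ht).differentiableAt.differentiableWithinAt
    · intro t ht
      rw [interior_Ioc] at ht
      rw [(hφdiff t ht).deriv]
      apply mul_nonneg (pow_nonneg ht.1.le _)
      rw [sub_nonneg, hC]
      apply mul_le_mul
      · exact Real.exp_le_exp.2 (by nlinarith [ht.1.le, ht.2.le])
      · exact hanti ht.1 (hd.1 : (0:ℝ) < d) ht.2.le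
      · exact hξd
      · exact (Real.exp_pos _).le
  -- limit of φ at 0⁺
  have hφlim : Filter.Tendsto φ (nhdsWithin 0 (Set.Ioi 0)) (nhds 0) := by
    have hrw : φ = fun s => Real.exp (-hstar * s) * (s ^ (k-1) * deriv ψ s)
        - C / k * s ^ k := by
      funext s; simp [hφ]; ring
    rw [hrw]
    have T1 : Filter.Tendsto (fun s : ℝ => Real.exp (-hstar * s))
        (nhdsWithin 0 (Set.Ioi 0)) (nhds 1) := by
      have : Continuous (fun s : ℝ => Real.exp (-hstar * s)) :=
        Real.continuous_exp.comp (continuous_const.mul continuous_id)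
      have h := (this.tendsto 0).mono_left
        (nhdsWithin_le_nhds (s := Set.Ioi (0:ℝ)))
      simpa using h
    have T2 : Filter.Tendsto (fun s : ℝ => C / k * s ^ k)
        (nhdsWithin 0 (Set.Ioi 0)) (nhds 0) := by
      have : Continuous (fun s : ℝ => C / k * s ^ k) :=
        continuous_const.mul (continuous_pow k)
      have h := (this.tendsto 0).mono_left
        (nhdsWithin_le_nhds (s := Set.Ioi (0:ℝ)))
      simpa [zero_pow (show k ≠ 0 by omega)] using h
    have := (T1.mul hlim).sub T2
    simpa using this
  -- conclude 0 ≤ φ d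
  have hmem : Set.Ioc (0:ℝ) d ∈ nhdsWithin 0 (Set.Ioi 0) := by
    rw [mem_nhdsWithin]
    exact ⟨Set.Iio d, isOpen_Iio, hd0, fun t ht => ⟨ht.2, ht.1.le⟩⟩
  have hev : ∀ᶠ t in nhdsWithin 0 (Set.Ioi 0), φ t ≤ φ d := by
    filter_upwards [hmem] with t ht
    exact hmono ht ⟨hd0, le_refl d⟩ ht.2
  have hφd : 0 ≤ φ d := le_of_tendsto hφlim hev
  -- unfold
  have hfact : φ d = (Real.exp (-hstar * d) * d ^ (k-1)) * (deriv ψ d - d * ξ d / k) := by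
    have hdk : d ^ k = d ^ (k-1) * d := by
      rw [← pow_succ]; congr 1; omega
    rw [hφ]; simp only; rw [hdk, hC]; field_simp
  rw [hfact] at hφd
  have hpos : 0 < Real.exp (-hstar * d) * d ^ (k-1) :=
    mul_pos (Real.exp_pos _) (pow_pos hd0 _)
  nlinarith [hφd, hpos, mul_pos hpos hpos]
end RealSide2

end Aux

set_option maxHeartbeats 1000000 in
/-- Radial ODE lemma. Let n ≥ 2, k ∈ {1,…,n−1}, R > 0, h ≥ 0 with hR < k,
h* ≥ max{h, h/(k−hR)}; let ξ : (0,∞) → [0,∞) be continuous, non-increasing with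
∫₀^ε t^{k-1}ξ < ∞, and ψ solve (t^{k-1}e^{-h*t}ψ')' = e^{-h*t}t^{k-1}ξ on (0,R) with
t^{k-1}ψ'(t) → 0 as t → 0. Then w(x) = ψ(|x−x₀|) satisfies
P_k^-(∇²w) − h|∇w| ≥ ξ(r)/(1 + h*R) on B_R(x₀)∖{x₀}. -/
theorem stmt5 (n k : ℕ) (hn : 2 ≤ n) (hk1 : 1 ≤ k) (hkn : k ≤ n - 1)
    (R h hstar : ℝ) (hR : 0 < R) (hh : 0 ≤ h) (hhR : h * R < k)
    (hhs : max h (h / ((k : ℝ) - h * R)) ≤ hstar)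
    (ξ : ℝ → ℝ) (hcont : ContinuousOn ξ (Set.Ioi 0))
    (hanti : AntitoneOn ξ (Set.Ioi 0)) (hnn : ∀ t ∈ Set.Ioi (0 : ℝ), 0 ≤ ξ t)
    (hint : ∃ ε > (0 : ℝ), IntegrableOn (fun t => t ^ (k - 1) * ξ t) (Set.Ioc 0 ε))
    (ψ : ℝ → ℝ) (hψ : ContDiffOn ℝ 2 ψ (Set.Ioo 0 R))
    (hode : ∀ t ∈ Set.Ioo (0 : ℝ) R,
      deriv (fun s => s ^ (k - 1) * Real.exp (-hstar * s) * deriv ψ s) t =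
        Real.exp (-hstar * t) * t ^ (k - 1) * ξ t)
    (hlim : Filter.Tendsto (fun t => t ^ (k - 1) * deriv ψ t)
      (nhdsWithin 0 (Set.Ioi 0)) (nhds 0))
    (x₀ : EuclideanSpace ℝ (Fin n)) :
    ∀ x ∈ Metric.ball x₀ R, x ≠ x₀ →
      ξ ‖x - x₀‖ / (1 + hstar * R) ≤
        PkHess n k (fun y => ψ ‖y - x₀‖) x -
          h * ‖gradient (fun y => ψ ‖y - x₀‖) x‖ := by
  intro x hxball hxne
  set d : ℝ := ‖x - x₀‖ with hdd
  have hz : x - x₀ ≠ 0 := sub_ne_zero.2 hxne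
  have hd0 : 0 < d := norm_pos_iff.2 hz
  have hdR : d < R := by
    rw [Metric.mem_ball, dist_eq_norm] at hxball
    exact hxball
  have hdIoo : d ∈ Set.Ioo 0 R := ⟨hd0, hdR⟩
  -- scalar constants
  have hkpos : (0:ℝ) < k := by exact_mod_cast hk1
  have hhs1 : h ≤ hstar := (le_max_left _ _).trans hhs
  have hs0 : 0 ≤ hstar := hh.trans hhs1
  have hkhR0 : (0:ℝ) < (k:ℝ) - h * R := by linarith
  have hy : h ≤ hstar * ((k:ℝ) - h * R) := by
    have := (le_max_right h (h / ((k : ℝ) - h * R))).trans hhs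
    rw [div_le_iff₀ hkhR0] at this
    linarith [this]
  have hD : (0:ℝ) < 1 + hstar * R := by nlinarith
  have hξd : 0 ≤ ξ d := hnn d hd0
  set p : ℝ := deriv ψ d with hpdef
  set p2 : ℝ := deriv (deriv ψ) d with hp2def
  have hp1 : d * ξ d / k ≤ p := psi_first hψ hode hanti hnn hlim hk1 hs0 hdIoo
  have hp0 : 0 ≤ p := le_trans (by positivity) hp1
  have hkp : d * ξ d ≤ p * k := by
    rw [div_le_iff₀ hkpos] at hp1
    exact hp1
  have hp2eq : d * p2 = d * ξ d + hstar * d * p - ((k:ℝ) - 1) * p := by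
    have := psi_second hψ hode hk1 hdIoo
    rw [Nat.cast_sub hk1, Nat.cast_one] at this
    exact this
  -- gradient
  have hdiffψ : HasDerivAt ψ (deriv ψ d) d :=
    (((hψ.differentiableOn two_ne_zero) d hdIoo).differentiableAt
      (isOpen_Ioo.mem_nhds hdIoo)).hasDerivAt
  have hgrad := radial_gradient hxne hdiffψ
  have hgnorm : ‖gradient (fun y => ψ ‖y - x₀‖) x‖ = p := by
    rw [hgrad, norm_smul, Real.norm_eq_abs, abs_of_nonneg (div_nonneg hp0 hd0.le), ← hdd]
    field_simp
  -- the unit radial vector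
  set u : EuclideanSpace ℝ (Fin n) := d⁻¹ • (x - x₀) with hu
  have hunorm : ‖u‖ = 1 := by
    rw [hu, norm_smul, Real.norm_eq_abs, abs_of_nonneg (inv_nonneg.2 hd0.le), ← hdd]
    field_simp
  -- lower bound for PkHess
  have hPk : ξ d / (1 + hstar * R) + h * p ≤ PkHess n k (fun y => ψ ‖y - x₀‖) x := by
    apply le_csInf
    · refine ⟨_, fun i => (EuclideanSpace.basisFun (Fin n) ℝ)
        (Fin.castLE (hkn.trans (Nat.sub_le n 1)) i),
        (EuclideanSpace.basisFun (Fin n) ℝ).orthonormal.comp _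
          (Fin.castLE_injective _), rfl⟩
    · rintro b ⟨e, he, rfl⟩
      have hHi : ∀ i, iteratedFDeriv ℝ 2 (fun y => ψ ‖y - x₀‖) x ![e i, e i] =
          p / d + (p2 - p / d) * (inner ℝ u (e i) : ℝ) ^ 2 := by
        intro i
        rw [radial_hessian isOpen_Ioo hψ hxne hdIoo (e i), he.1 i]
        ring
      set A : ℝ := ∑ i, (inner ℝ u (e i) : ℝ) ^ 2 with hA
      have hsum : ∑ i, iteratedFDeriv ℝ 2 (fun y => ψ ‖y - x₀‖) x ![e i, e i] =
          (k:ℝ) * (p / d) + (p2 - p / d) * A := by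
        rw [Finset.sum_congr rfl (fun i _ => hHi i), Finset.sum_add_distrib,
          Finset.sum_const, ← Finset.mul_sum, Finset.card_univ, Fintype.card_fin,
          nsmul_eq_mul]
      rw [hsum]
      have hA0 : 0 ≤ A := Finset.sum_nonneg fun i _ => sq_nonneg _
      have hA1 : A ≤ 1 := by
        have hb := he.sum_inner_products_le (s := Finset.univ) u
        rw [hunorm] at hb
        have : A = ∑ i, ‖(inner ℝ (e i) u : ℝ)‖ ^ 2 := by
          apply Finset.sum_congr rfl
          intro i _
          rw [Real.norm_eq_abs, sq_abs, real_inner_comm]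
        rw [this]
        simpa using hb
      -- the key scalar inequality
      have hp2' : p2 = ξ d + hstar * p - ((k:ℝ) - 1) * p / d := by
        field_simp
        linarith [hp2eq]
      rcases le_or_gt p2 (p / d) with hcase | hcase
      · -- A gets coefficient ≤ 0 : use A ≤ 1
        have hterm : (p2 - p / d) * 1 ≤ (p2 - p / d) * A := by
          apply mul_le_mul_of_nonpos_left hA1 (by linarith)
        have hval : (k:ℝ) * (p / d) + (p2 - p / d) * 1 = ξ d + hstar * p := by
          rw [hp2']
          field_simp
          ring
        have hstep : ξ d / (1 + hstar * R) ≤ ξ d := div_le_self hξd (by nlinarith)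
        have hstep2 : h * p ≤ hstar * p := mul_le_mul_of_nonneg_right hhs1 hp0
        linarith
      · -- A gets coefficient > 0 : use A ≥ 0
        have hterm : 0 ≤ (p2 - p / d) * A := mul_nonneg (by linarith) hA0
        have B1 : (k:ℝ) ≤ ((k:ℝ) - h * R) * (1 + hstar * R) := by
          nlinarith [mul_nonneg hR.le (sub_nonneg.2 hy)]
        have step1 : ξ d / (1 + hstar * R) ≤ ξ d * ((k:ℝ) - h * R) / k := by
          rw [div_le_div_iff₀ hD hkpos]
          nlinarith [mul_le_mul_of_nonneg_left B1 hξd]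
        have step2 : ξ d * ((k:ℝ) - h * R) / k ≤ p * ((k:ℝ) - h * R) / d := by
          rw [div_le_div_iff₀ hkpos hd0]
          nlinarith [mul_le_mul_of_nonneg_right hkp hkhR0.le]
        have step3 : p * ((k:ℝ) - h * R) / d ≤ (k:ℝ) * (p / d) - h * p := by
          have hnum : p * ((k:ℝ) - h * R) ≤ p * ((k:ℝ) - h * d) := by
            nlinarith [mul_le_mul_of_nonneg_left hdR.le hh]
          have : p * ((k:ℝ) - h * d) / d = (k:ℝ) * (p / d) - h * p := by
            field_simp
          rw [← this]
          exact (div_le_div_iff_of_pos_right hd0).2 hnum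
        linarith
  rw [hgnorm]
  linarith [hPk]
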